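/- arXiv:1409.6899 — 2 statements merged into one kernel-verified Lean document; each statement's English description precedes it below -/
import Mathlib

section
/- Let A be a Dedekind domain with fraction field K, and let K ⊆ L ⊆ M be finite separable extensions with B, C the integral closures of A in L, M respectively. Then the differents satisfy 𝔇_{C/A} = 𝔇_{C/B} · 𝔇_{B/A} as ideals of C. -/
open scoped nonZeroDivisors

/-- **Transitivity of the different.**  Let `A` be a Dedekind domain with
fraction field `K`, and let `K ⊆ L ⊆ M` be finite separable extensions with `B`, `C`
the integral closures of `A` in `L`, `M` respectively.  Then the differents satisfy
`𝔇_{C/A} = 𝔇_{C/B} · 𝔇_{B/A}` as ideals of `C` (where `𝔇_{B/A}` is extended to an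
ideal of `C` along `B → C`). -/
theorem differentIdeal_transitivity
    (A K L M B C : Type*)
    [CommRing A] [IsDomain A] [IsDedekindDomain A]
    [Field K] [Field L] [Field M]
    [Algebra A K] [IsFractionRing A K]
    [Algebra K L] [Algebra K M] [Algebra L M] [IsScalarTower K L M]
    [FiniteDimensional K L] [Algebra.IsSeparable K L]
    [FiniteDimensional L M] [Algebra.IsSeparable L M]
    [FiniteDimensional K M] [Algebra.IsSeparable K M]
    [CommRing B] [IsDomain B] [IsDedekindDomain B]
    [CommRing C] [IsDomain C] [IsDedekindDomain C]
    [Algebra A B] [Algebra B L] [Algebra A L]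
    [IsScalarTower A B L] [IsScalarTower A K L]
    [IsFractionRing B L] [IsIntegralClosure B A L]
    [Algebra B C] [Algebra C M] [Algebra B M]
    [IsScalarTower B C M] [IsScalarTower B L M]
    [IsFractionRing C M] [IsIntegralClosure C B M]
    [Algebra A C] [Algebra A M]
    [IsScalarTower A B C] [IsScalarTower A C M] [IsScalarTower A K M]
    [IsIntegralClosure C A M]
    [NoZeroSMulDivisors A B] [NoZeroSMulDivisors B C] [NoZeroSMulDivisors A C] :
    differentIdeal A C =
      differentIdeal B C * Ideal.map (algebraMap B C) (differentIdeal A B) := by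
  classical
  have honeL : (1 : FractionalIdeal B⁰ L) ≠ 0 := one_ne_zero
  have honeM : (1 : FractionalIdeal C⁰ M) ≠ 0 := one_ne_zero
  have hBC : Function.Injective (algebraMap B C) :=
    (injective_iff_map_eq_zero _).mpr fun b hb => by
      have : b • (1 : C) = 0 := by rw [Algebra.smul_def, hb, zero_mul]
      exact (NoZeroSMulDivisors.eq_zero_or_eq_zero_of_smul_eq_zero this).resolve_right one_ne_zero
  have h1 : ((differentIdeal A B : Ideal B) : FractionalIdeal B⁰ L)
      = (FractionalIdeal.dual A K 1)⁻¹ := coeIdeal_differentIdeal A K L B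
  have hdualL : (FractionalIdeal.dual A K (1 : FractionalIdeal B⁰ L)) ≠ 0 :=
    FractionalIdeal.dual_ne_zero A K honeL
  have h𝔇ne : ((differentIdeal A B : Ideal B) : FractionalIdeal B⁰ L) ≠ 0 := by
    rw [h1]; exact inv_ne_zero hdualL
  have h𝔇bot : differentIdeal A B ≠ ⊥ := by
    intro h
    exact h𝔇ne (by rw [h]; simp)
  have hJbot : Ideal.map (algebraMap B C) (differentIdeal A B) ≠ ⊥ := fun h =>
    h𝔇bot (by rwa [Ideal.map_eq_bot_iff_of_injective hBC] at h)
  have hJ : ((Ideal.map (algebraMap B C) (differentIdeal A B) : Ideal C) :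
      FractionalIdeal C⁰ M) ≠ 0 := by
    rwa [ne_eq, FractionalIdeal.coeIdeal_eq_zero]
  have key : FractionalIdeal.dual A K (1 : FractionalIdeal C⁰ M)
      = FractionalIdeal.dual B L
        ((Ideal.map (algebraMap B C) (differentIdeal A B) : Ideal C) :
          FractionalIdeal C⁰ M) := by
    ext x
    rw [FractionalIdeal.mem_dual honeM, FractionalIdeal.mem_dual hJ]
    have tr_eq : ∀ (c : C) (b : B),
        Algebra.trace L M (x * algebraMap C M c) * algebraMap B L b
          = Algebra.trace L M (x * algebraMap C M (c * algebraMap B C b)) := by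
      intro c b
      have h : x * algebraMap C M (c * algebraMap B C b)
          = algebraMap B L b • (x * algebraMap C M c) := by
        rw [Algebra.smul_def, map_mul, ← IsScalarTower.algebraMap_apply B C M,
          IsScalarTower.algebraMap_apply B L M]
        ring
      rw [h, map_smul, smul_eq_mul, mul_comm]
    constructor
    · intro hx
      have claim : ∀ c : C, Algebra.trace L M (x * algebraMap C M c)
          ∈ FractionalIdeal.dual A K (1 : FractionalIdeal B⁰ L) := by
        intro c
        rw [FractionalIdeal.mem_dual honeL]
        intro b hb
        obtain ⟨b, rfl⟩ := (FractionalIdeal.mem_one_iff _).mp hb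
        rw [Algebra.traceForm_apply, tr_eq, Algebra.trace_trace (S := L)]
        have := hx (algebraMap C M (c * algebraMap B C b))
          ((FractionalIdeal.mem_one_iff _).mpr ⟨_, rfl⟩)
        rwa [Algebra.traceForm_apply] at this
      have H : ∀ a ∈ Ideal.map (algebraMap B C) (differentIdeal A B), ∀ c : C,
          Algebra.trace L M (x * algebraMap C M (c * a)) ∈ (algebraMap B L).range := by
        intro a haJ
        replace haJ : a ∈ Submodule.span C
            ((algebraMap B C) '' (differentIdeal A B : Set B)) := haJ
        induction haJ using Submodule.span_induction with
        | mem a ha =>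
          rcases ha with ⟨d, hd, rfl⟩
          intro c
          rw [← tr_eq]
          have hmul := FractionalIdeal.mul_mem_mul (claim c)
            ((FractionalIdeal.mem_coeIdeal _).mpr ⟨d, hd, rfl⟩)
          rw [h1, mul_inv_cancel₀ hdualL] at hmul
          obtain ⟨b, hb⟩ := (FractionalIdeal.mem_one_iff _).mp hmul
          exact ⟨b, hb⟩
        | zero =>
          intro c
          rw [mul_zero, map_zero, mul_zero, map_zero]
          exact zero_mem _
        | add a b _ _ iha ihb =>
          intro c
          rw [mul_add, map_add, mul_add, map_add]
          exact add_mem (iha c) (ihb c)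
        | smul c' a _ ih =>
          intro c
          rw [smul_eq_mul, ← mul_assoc]
          exact ih (c * c')
      intro a ha
      obtain ⟨a, haJ, rfl⟩ := (FractionalIdeal.mem_coeIdeal _).mp ha
      rw [Algebra.traceForm_apply]
      have := H a haJ 1
      rwa [one_mul] at this
    · intro hx a ha
      obtain ⟨c, rfl⟩ := (FractionalIdeal.mem_one_iff _).mp ha
      have hy : Algebra.trace L M (x * algebraMap C M c)
          ∈ FractionalIdeal.dual A K (1 : FractionalIdeal B⁰ L) := by
        rw [← inv_inv (FractionalIdeal.dual A K (1 : FractionalIdeal B⁰ L)), ← h1,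
          FractionalIdeal.mem_inv_iff h𝔇ne]
        intro d hd
        obtain ⟨d, hdmem, rfl⟩ := (FractionalIdeal.mem_coeIdeal _).mp hd
        rw [tr_eq, FractionalIdeal.mem_one_iff]
        have hmem : c * algebraMap B C d
            ∈ Ideal.map (algebraMap B C) (differentIdeal A B) := by
          rw [mul_comm]
          exact Ideal.mul_mem_right _ _ (Ideal.mem_map_of_mem _ hdmem)
        have := hx (algebraMap C M (c * algebraMap B C d))
          ((FractionalIdeal.mem_coeIdeal _).mpr ⟨_, hmem, rfl⟩)
        rw [Algebra.traceForm_apply] at this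
        obtain ⟨b, hb⟩ := this
        exact ⟨b, hb⟩
      have h2 := (FractionalIdeal.mem_dual honeL).mp hy 1 (FractionalIdeal.one_mem_one _)
      rw [Algebra.traceForm_apply, mul_one] at h2
      rw [Algebra.traceForm_apply, ← Algebra.trace_trace (S := L)]
      exact h2
  have final : ((differentIdeal A C : Ideal C) : FractionalIdeal C⁰ M)
      = ((differentIdeal B C * Ideal.map (algebraMap B C) (differentIdeal A B) : Ideal C) :
          FractionalIdeal C⁰ M) := by
    rw [FractionalIdeal.coeIdeal_mul, coeIdeal_differentIdeal A K M C,
      coeIdeal_differentIdeal B L M C, key, FractionalIdeal.dual_eq_mul_inv B L,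
      mul_inv, inv_inv]
  exact FractionalIdeal.coeIdeal_injective final
end

section
/- Let L/K be a finite totally ramified Galois extension of complete discretely valued fields with Galois group G = Gal(L/K), valuation ring B of L with maximal ideal 𝔪_L, and π a uniformizer of L. For each i ≥ 0 the map σ ↦ σ(π)/π mod U_L^{i+1} induces an injective group homomorphism G_i/G_{i+1} ↪ U_L^i/U_L^{i+1}, independent of the choice of uniformizer π, where U_L^0 = B^× and U_L^i = 1 + 𝔪_L^i for i > 0. -/
open Classical Polynomial

/-- The distance `dist x y = exp (-v (x - y))` attached to a discrete valuation `v`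
(with the convention `dist x x = 0`). -/
noncomputable def vdist {L : Type*} [Field L] (v : L → ℤ) (x y : L) : ℝ :=
  if x = y then 0 else Real.exp (-(v (x - y) : ℝ))

/-- Completeness of a discretely valued field: every Cauchy sequence for the
valuation metric converges. -/
def VComplete {L : Type*} [Field L] (v : L → ℤ) : Prop :=
  ∀ a : ℕ → L,
    (∀ ε : ℝ, 0 < ε → ∃ N : ℕ, ∀ m n : ℕ, N ≤ m → N ≤ n → vdist v (a m) (a n) < ε) →
    ∃ l : L, ∀ ε : ℝ, 0 < ε → ∃ N : ℕ, ∀ n : ℕ, N ≤ n → vdist v (a n) l < ε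

/-- Membership in the valuation ring `{x : v x ≥ 0}` of a discretely valued field. -/
def InIntegers {L : Type*} [Field L] (v : L → ℤ) (x : L) : Prop :=
  x = 0 ∨ 0 ≤ v x

/-- `v` is a normalized discrete valuation on the field `L` : it is surjective onto `ℤ`,
multiplicative and satisfies the ultrametric inequality (on nonzero elements). -/
def IsDiscreteValuationOn (L : Type*) [Field L] (v : L → ℤ) : Prop :=
  (∀ n : ℤ, ∃ x : L, x ≠ 0 ∧ v x = n) ∧
  (∀ x y : L, x ≠ 0 → y ≠ 0 → v (x * y) = v x + v y) ∧
  (∀ x y : L, x ≠ 0 → y ≠ 0 → x + y ≠ 0 → min (v x) (v y) ≤ v (x + y))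

/-- The residue field extension of `L/K` is separable: the residue class of each
integral element of `L` is a simple root of (the reduction of) a polynomial with
integral coefficients in `K`. -/
def ResidueSeparable (K L : Type*) [Field K] [Field L] [Algebra K L] (v : L → ℤ) : Prop :=
  ∀ x : L, InIntegers v x →
    ∃ g : Polynomial K,
      (∀ n : ℕ, InIntegers v (algebraMap K L (g.coeff n))) ∧
      (aeval x g = 0 ∨ 0 < v (aeval x g)) ∧
      aeval x (derivative g) ≠ 0 ∧ v (aeval x (derivative g)) = 0

/-- The residue characteristic of `(L, v)` is `p` : either `p` is a prime belonging to
the maximal ideal of the valuation ring, or `p = 0` and every prime is a unit of the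
valuation ring. -/
def ResidueCharIs {L : Type*} [Field L] (v : L → ℤ) (p : ℕ) : Prop :=
  (p.Prime ∧ ((p : L) = 0 ∨ 0 < v ((p : L)))) ∨
  (p = 0 ∧ ∀ q : ℕ, q.Prime → ((q : L) ≠ 0 ∧ v ((q : L)) = 0))

/-- `σ ∈ G_i`, the `i`-th ramification group of `L/K` in the lower numbering:
`v (σ x - x) ≥ i + 1` for every `x` in the valuation ring of `L`. -/
def InRamificationGroup (K : Type*) {L : Type*} [Field K] [Field L] [Algebra K L]
    (v : L → ℤ) (i : ℤ) (σ : L ≃ₐ[K] L) : Prop :=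
  ∀ x : L, InIntegers v x → (σ x = x ∨ i + 1 ≤ v (σ x - x))

/-- Congruence of two elements of `L^×` modulo the higher unit group `U_L^i`:
`c ≡ d mod U_L^i` iff `v (c/d - 1) ≥ i`. -/
def CongUnits {L : Type*} [Field L] (v : L → ℤ) (i : ℤ) (c d : L) : Prop :=
  c = d ∨ i ≤ v (c / d - 1)

namespace RamAux

variable {L : Type*} [Field L] {v : L → ℤ}

lemma v_one (hv : IsDiscreteValuationOn L v) : v 1 = 0 := by
  have := hv.2.1 1 1 one_ne_zero one_ne_zero
  simp only [mul_one] at this; omega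

lemma v_inv (hv : IsDiscreteValuationOn L v) {x : L} (hx : x ≠ 0) : v x⁻¹ = - v x := by
  have := hv.2.1 x x⁻¹ hx (inv_ne_zero hx)
  rw [mul_inv_cancel₀ hx, v_one hv] at this; omega

lemma v_neg (hv : IsDiscreteValuationOn L v) {x : L} (hx : x ≠ 0) : v (-x) = v x := by
  have h1 : v ((-1 : L)) = 0 := by
    have h2 := hv.2.1 (-1) (-1) (by norm_num) (by norm_num)
    have h3 := v_one hv
    norm_num at h2; omega
  have := hv.2.1 (-1) x (by norm_num) hx
  rw [h1] at this; rw [show -x = -1 * x by ring, this]; omega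

lemma v_pow (hv : IsDiscreteValuationOn L v) {x : L} (hx : x ≠ 0) (n : ℕ) :
    v (x ^ n) = n * v x := by
  induction n with
  | zero => simpa using v_one hv
  | succ k ih =>
    have := hv.2.1 (x ^ k) x (pow_ne_zero _ hx) hx
    rw [← pow_succ] at this
    rw [this, ih]; push_cast; ring

lemma v_zpow (hv : IsDiscreteValuationOn L v) {x : L} (hx : x ≠ 0) (n : ℤ) :
    v (x ^ n) = n * v x := by
  cases n with
  | ofNat k => rw [Int.ofNat_eq_coe, zpow_natCast, v_pow hv hx]
  | negSucc k =>
    rw [zpow_negSucc, v_inv hv (pow_ne_zero _ hx), v_pow hv hx, Int.negSucc_eq]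
    push_cast; ring

lemma v_min_sub (hv : IsDiscreteValuationOn L v) {x y : L} (hx : x ≠ 0) (hy : y ≠ 0)
    (hxy : x ≠ y) : min (v x) (v y) ≤ v (x - y) := by
  have := hv.2.2 x (-y) hx (neg_ne_zero.mpr hy) (by
    rw [← sub_eq_add_neg]; exact sub_ne_zero.mpr hxy)
  rw [← sub_eq_add_neg, v_neg hv hy] at this; exact this

/-- Two normalized discrete valuations with nested valuation rings are equal. -/
lemma val_unique (hv : IsDiscreteValuationOn L v) {w : L → ℤ}
    (hw : IsDiscreteValuationOn L w)
    (H : ∀ x : L, x ≠ 0 → 0 ≤ v x → 0 ≤ w x) :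
    ∀ x : L, x ≠ 0 → w x = v x := by
  -- reverse inclusion
  have H' : ∀ x : L, x ≠ 0 → 0 ≤ w x → 0 ≤ v x := by
    intro z hz hwz
    by_contra hvz
    push_neg at hvz
    obtain ⟨t, ht0, htw⟩ := hw.1 (-1)
    have htv : v t < 0 := by
      by_contra h
      push_neg at h
      have := H t ht0 h; omega
    set m : ℕ := (-(v t)).toNat with hm
    have hmv : (m : ℤ) = -(v t) := Int.toNat_of_nonneg (by omega)
    have hzi : z⁻¹ ≠ 0 := inv_ne_zero hz
    have hu0 : t * (z⁻¹) ^ m ≠ 0 := mul_ne_zero ht0 (pow_ne_zero _ hzi)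
    have hvu : v (t * (z⁻¹) ^ m) = v t - m * v z := by
      rw [hv.2.1 t _ ht0 (pow_ne_zero _ hzi), v_pow hv hzi, v_inv hv hz]; ring
    have hwu : w (t * (z⁻¹) ^ m) = -1 - m * w z := by
      rw [hw.2.1 t _ ht0 (pow_ne_zero _ hzi), v_pow hw hzi, v_inv hw hz, htw]; ring
    have h1 : 0 ≤ v (t * (z⁻¹) ^ m) := by
      rw [hvu]
      nlinarith [mul_nonneg (show (0:ℤ) ≤ -v t by omega) (show (0:ℤ) ≤ -1 - v z by omega)]
    have h2 := H _ hu0 h1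
    rw [hwu] at h2
    have h3 : (0:ℤ) ≤ (m:ℤ) * w z := mul_nonneg (by omega) hwz
    omega
  have E0 : ∀ x : L, x ≠ 0 → (0 ≤ v x ↔ 0 ≤ w x) := fun x hx => ⟨H x hx, H' x hx⟩
  have E1 : ∀ x : L, x ≠ 0 → (v x = 0 ↔ w x = 0) := by
    intro x hx
    have h1 := E0 x hx
    have h2 := E0 x⁻¹ (inv_ne_zero hx)
    rw [v_inv hv hx, v_inv hw hx] at h2
    omega
  -- uniformizers
  obtain ⟨pv, hpv0, hpv⟩ := hv.1 1
  have hwpv : 1 ≤ w pv := by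
    have h1 := E0 pv hpv0
    have h2 := E1 pv hpv0
    omega
  obtain ⟨pw, hpw0, hpw⟩ := hw.1 1
  have hvpw : 1 ≤ v pw := by
    have h1 := E0 pw hpw0
    have h2 := E1 pw hpw0
    omega
  -- show w pv = 1
  have hkey : w pv = 1 := by
    set a : ℕ := (v pw).toNat with ha
    have hav : (a : ℤ) = v pw := Int.toNat_of_nonneg (by omega)
    have hpvi : pv⁻¹ ≠ 0 := inv_ne_zero hpv0
    have hu0 : pw * (pv⁻¹) ^ a ≠ 0 := mul_ne_zero hpw0 (pow_ne_zero _ hpvi)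
    have hvu : v (pw * (pv⁻¹) ^ a) = 0 := by
      rw [hv.2.1 pw _ hpw0 (pow_ne_zero _ hpvi), v_pow hv hpvi, v_inv hv hpv0, hpv]
      omega
    have hwu : w (pw * (pv⁻¹) ^ a) = 0 := (E1 _ hu0).mp hvu
    rw [hw.2.1 pw _ hpw0 (pow_ne_zero _ hpvi), v_pow hw hpvi, v_inv hw hpv0, hpw] at hwu
    have h4 : 1 - (a : ℤ) * w pv = 0 := by rw [← hwu]; ring
    nlinarith [h4, hwpv, (by omega : (0:ℤ) ≤ (a:ℤ))]
  -- general element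
  intro x hx
  have hpvz : pv ≠ 0 := hpv0
  have hz : pv ^ (-(v x)) ≠ 0 := zpow_ne_zero _ hpvz
  have hu0 : x * pv ^ (-(v x)) ≠ 0 := mul_ne_zero hx hz
  have hvu : v (x * pv ^ (-(v x))) = 0 := by
    rw [hv.2.1 x _ hx hz, v_zpow hv hpvz, hpv]; ring
  have hwu : w (x * pv ^ (-(v x))) = 0 := (E1 _ hu0).mp hvu
  rw [hw.2.1 x _ hx hz, v_zpow hw hpvz, hkey] at hwu
  omega

end RamAux

namespace RamAux

variable {K L : Type*} [Field K] [Field L] [Algebra K L] {v : L → ℤ}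

lemma sigma_ne_zero (σ : L ≃ₐ[K] L) {x : L} (hx : x ≠ 0) : σ x ≠ 0 := by
  intro h
  exact hx (by simpa using σ.injective (h.trans (map_zero σ).symm))

lemma sigma_preserves_v (hv : IsDiscreteValuationOn L v) (i : ℕ) (σ : L ≃ₐ[K] L)
    (hσ : InRamificationGroup K v (i : ℤ) σ) :
    ∀ x : L, x ≠ 0 → v (σ x) = v x := by
  have hw : IsDiscreteValuationOn L (fun x => v (σ x)) := by
    refine ⟨?_, ?_, ?_⟩
    · intro n
      obtain ⟨x, hx0, hxn⟩ := hv.1 n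
      refine ⟨σ.symm x, fun h => hx0 ?_, ?_⟩
      · rw [← σ.apply_symm_apply x, h, map_zero]
      · show v (σ (σ.symm x)) = n
        rw [σ.apply_symm_apply]; exact hxn
    · intro x y hx hy
      show v (σ (x * y)) = v (σ x) + v (σ y)
      rw [map_mul]
      exact hv.2.1 _ _ (sigma_ne_zero σ hx) (sigma_ne_zero σ hy)
    · intro x y hx hy hxy
      show min (v (σ x)) (v (σ y)) ≤ v (σ (x + y))
      have h2 := hv.2.2 (σ x) (σ y) (sigma_ne_zero σ hx) (sigma_ne_zero σ hy)
        (by rw [← map_add]; exact sigma_ne_zero σ hxy)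
      rw [map_add]; exact h2
  have H : ∀ x : L, x ≠ 0 → 0 ≤ v x → 0 ≤ v (σ x) := by
    intro x hx hvx
    rcases eq_or_ne (σ x) x with h | h
    · rw [h]; exact hvx
    · have hr : (i : ℤ) + 1 ≤ v (σ x - x) := by
        rcases hσ x (Or.inr hvx) with h' | h'
        · exact absurd h' h
        · exact h'
      have hsub : σ x - x ≠ 0 := sub_ne_zero.mpr h
      have heq : (σ x - x) + x = σ x := by ring
      have h2 := hv.2.2 (σ x - x) x hsub hx (by rw [heq]; exact sigma_ne_zero σ hx)
      rw [heq] at h2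
      omega
  exact val_unique hv hw H

end RamAux

namespace RamAux2

variable {K L : Type*} [Field K] [Field L] [Algebra K L] {v : L → ℤ}
open RamAux

lemma approx (hv : IsDiscreteValuationOn L v)
    (htot : ∀ x : L, InIntegers v x →
      ∃ y : K, InIntegers v (algebraMap K L y) ∧
        (x = algebraMap K L y ∨ 0 < v (x - algebraMap K L y)))
    {π : L} (hπ0 : π ≠ 0) (hπ : v π = 1) (i : ℕ) (σ : L ≃ₐ[K] L)
    (hpres : ∀ x : L, x ≠ 0 → v (σ x) = v x)
    (hσπ : σ π = π ∨ (i : ℤ) + 2 ≤ v (σ π - π)) :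
    ∀ N : ℕ, ∀ x : L, InIntegers v x →
      σ x = x ∨ (σ x ≠ x ∧ min ((i : ℤ) + 2) (N : ℤ) ≤ v (σ x - x)) := by
  intro N
  induction N with
  | zero =>
    intro x hx
    rcases eq_or_ne (σ x) x with h | h
    · exact Or.inl h
    · right
      refine ⟨h, ?_⟩
      have hx0 : x ≠ 0 := by rintro rfl; exact h (map_zero σ)
      have hvx : 0 ≤ v x := hx.resolve_left hx0
      have h2 := v_min_sub hv (sigma_ne_zero σ hx0) hx0 h
      rw [hpres x hx0] at h2
      simp only [Nat.cast_zero]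
      omega
  | succ N ih =>
    intro x hx
    obtain ⟨y, hyint, hyc⟩ := htot x hx
    set Y := algebraMap K L y with hY
    have hσY : σ Y = Y := σ.commutes y
    by_cases hd : x - Y = 0
    · left
      have hxY : x = Y := sub_eq_zero.mp hd
      rw [hxY, hσY]
    · have hvd : 1 ≤ v (x - Y) := by
        rcases hyc with h | h
        · exact absurd (by rw [h, sub_self]) hd
        · omega
      set d := x - Y with hdd
      set x1 := d / π with hx1
      have hx10 : x1 ≠ 0 := div_ne_zero hd hπ0
      have hvx1 : v x1 = v d - 1 := by
        rw [hx1, div_eq_mul_inv, hv.2.1 d π⁻¹ hd (inv_ne_zero hπ0), v_inv hv hπ0, hπ]; ring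
      have hx1int : InIntegers v x1 := Or.inr (by omega)
      have hdx : d = x1 * π := (div_mul_cancel₀ d hπ0).symm
      have key : σ x - x = σ x1 * (σ π - π) + (σ x1 - x1) * π := by
        have h1 : σ x - x = σ d - d := by
          have hxd : x = d + Y := by rw [hdd]; ring
          rw [hxd, map_add, hσY]; ring
        rw [h1, hdx, map_mul]; ring
      have hA : σ x1 * (σ π - π) = 0 ∨
          (σ x1 * (σ π - π) ≠ 0 ∧ (i : ℤ) + 2 ≤ v (σ x1 * (σ π - π))) := by
        rcases eq_or_ne (σ π) π with h | h
        · left; rw [h, sub_self, mul_zero]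
        · right
          have hsp : σ π - π ≠ 0 := sub_ne_zero.mpr h
          have hb : (i : ℤ) + 2 ≤ v (σ π - π) := by
            rcases hσπ with h' | h'
            · exact absurd h' h
            · exact h'
          refine ⟨mul_ne_zero (sigma_ne_zero σ hx10) hsp, ?_⟩
          rw [hv.2.1 _ _ (sigma_ne_zero σ hx10) hsp, hpres x1 hx10]
          omega
      have hB : (σ x1 - x1) * π = 0 ∨
          ((σ x1 - x1) * π ≠ 0 ∧ min ((i : ℤ) + 2) (N : ℤ) + 1 ≤ v ((σ x1 - x1) * π)) := by
        rcases ih x1 hx1int with h | ⟨hne, hb⟩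
        · left; rw [h, sub_self, zero_mul]
        · right
          have hs : σ x1 - x1 ≠ 0 := sub_ne_zero.mpr hne
          refine ⟨mul_ne_zero hs hπ0, ?_⟩
          rw [hv.2.1 _ _ hs hπ0, hπ]
          omega
      rcases hA with hA0 | ⟨hAne, hAb⟩
      · rcases hB with hB0 | ⟨hBne, hBb⟩
        · left
          have h1 : σ x - x = 0 := by rw [key, hA0, hB0]; ring
          exact sub_eq_zero.mp h1
        · right
          have h1 : σ x - x = (σ x1 - x1) * π := by rw [key, hA0]; ring
          refine ⟨fun h => hBne (by rw [← h1, h, sub_self]), ?_⟩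
          rw [h1]; push_cast; omega
      · rcases hB with hB0 | ⟨hBne, hBb⟩
        · right
          have h1 : σ x - x = σ x1 * (σ π - π) := by rw [key, hB0]; ring
          refine ⟨fun h => hAne (by rw [← h1, h, sub_self]), ?_⟩
          rw [h1]; push_cast; omega
        · rcases eq_or_ne (σ x) x with h | h
          · exact Or.inl h
          · right
            refine ⟨h, ?_⟩
            have hsum : σ x1 * (σ π - π) + (σ x1 - x1) * π ≠ 0 := by
              rw [← key]; exact sub_ne_zero.mpr h
            have h2 := hv.2.2 _ _ hAne hBne hsum
            rw [key]; push_cast; omega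

end RamAux2


/-- Let `L/K` be a finite totally ramified Galois extension of
complete discretely valued fields with Galois group `G`, valuation ring `B` of `L` and
uniformizer `π`.  For each `i ≥ 0` the map `σ ↦ σ(π)/π mod U_L^{i+1}` induces an
injective group homomorphism `G_i/G_{i+1} ↪ U_L^i/U_L^{i+1}`, independent of the choice
of the uniformizer `π`:  for `σ ∈ G_i` the element `σ(π)/π` lies in `U_L^i`; the map is
multiplicative modulo `U_L^{i+1}`; its kernel is exactly `G_{i+1}`; and modulo
`U_L^{i+1}` it does not depend on `π`. -/
theorem ramification_quotient_embeds_in_units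
    (K L : Type*) [Field K] [Field L] [Algebra K L]
    [FiniteDimensional K L] [IsGalois K L]
    (v : L → ℤ) (hv : IsDiscreteValuationOn L v)
    (hcomplL : VComplete v)
    (hcomplK : VComplete (fun y : K => v (algebraMap K L y)))
    (htot : ∀ x : L, InIntegers v x →
      ∃ y : K, InIntegers v (algebraMap K L y) ∧
        (x = algebraMap K L y ∨ 0 < v (x - algebraMap K L y)))
    (π : L) (hπ0 : π ≠ 0) (hπ : v π = 1) (i : ℕ) :
    (∀ σ : L ≃ₐ[K] L, InRamificationGroup K v i σ →
        v (σ π / π) = 0 ∧ CongUnits v i (σ π / π) 1)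
    ∧ (∀ σ τ : L ≃ₐ[K] L, InRamificationGroup K v i σ → InRamificationGroup K v i τ →
        CongUnits v ((i : ℤ) + 1) (σ (τ π) / π) ((σ π / π) * (τ π / π)))
    ∧ (∀ σ : L ≃ₐ[K] L, InRamificationGroup K v i σ →
        (CongUnits v ((i : ℤ) + 1) (σ π / π) 1 ↔ InRamificationGroup K v ((i : ℤ) + 1) σ))
    ∧ (∀ π' : L, π' ≠ 0 → v π' = 1 → ∀ σ : L ≃ₐ[K] L, InRamificationGroup K v i σ →
        CongUnits v ((i : ℤ) + 1) (σ π / π) (σ π' / π')) := by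
  have hπint : InIntegers v π := Or.inr (by rw [hπ]; norm_num)
  have hsp_val : ∀ (ρ : L ≃ₐ[K] L), InRamificationGroup K v (i : ℤ) ρ →
      ∀ x : L, x ≠ 0 → v (ρ x) = v x := fun ρ hρ => RamAux.sigma_preserves_v hv i ρ hρ
  refine ⟨?_, ?_, ?_, ?_⟩
  · -- Part 1
    intro σ hσ
    have hpres := hsp_val σ hσ
    have hσπ0 : σ π ≠ 0 := RamAux.sigma_ne_zero σ hπ0
    have hv1 : v (σ π / π) = 0 := by
      rw [div_eq_mul_inv, hv.2.1 _ _ hσπ0 (inv_ne_zero hπ0), RamAux.v_inv hv hπ0,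
        hpres π hπ0, hπ]
      omega
    refine ⟨hv1, ?_⟩
    rcases eq_or_ne (σ π) π with h | h
    · exact Or.inl (by rw [h, div_self hπ0])
    · refine Or.inr ?_
      have hsp : σ π - π ≠ 0 := sub_ne_zero.mpr h
      have hb : (i : ℤ) + 1 ≤ v (σ π - π) := (hσ π hπint).resolve_left h
      have he : σ π / π / 1 - 1 = (σ π - π) / π := by field_simp
      rw [he, div_eq_mul_inv, hv.2.1 _ _ hsp (inv_ne_zero hπ0), RamAux.v_inv hv hπ0, hπ]
      omega
  · -- Part 2
    intro σ τ hσ hτ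
    have hpresσ := hsp_val σ hσ
    have hpresτ := hsp_val τ hτ
    have hσπ0 : σ π ≠ 0 := RamAux.sigma_ne_zero σ hπ0
    have hτπ0 : τ π ≠ 0 := RamAux.sigma_ne_zero τ hπ0
    set b := τ π / π with hb
    have hb0 : b ≠ 0 := div_ne_zero hτπ0 hπ0
    have hvb : v b = 0 := by
      rw [hb, div_eq_mul_inv, hv.2.1 _ _ hτπ0 (inv_ne_zero hπ0), RamAux.v_inv hv hπ0,
        hpresτ π hπ0, hπ]
      omega
    have hbint : InIntegers v b := Or.inr (le_of_eq hvb.symm)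
    have hπb : π * b = τ π := by rw [hb]; field_simp
    have hστ : σ (τ π) = σ π * σ b := by rw [← hπb, map_mul]
    rcases eq_or_ne (σ b) b with h | h
    · refine Or.inl ?_
      rw [hστ, h]; ring
    · refine Or.inr ?_
      have hs : σ b - b ≠ 0 := sub_ne_zero.mpr h
      have hbnd : (i : ℤ) + 1 ≤ v (σ b - b) := (hσ b hbint).resolve_left h
      have hσb0 : σ b ≠ 0 := RamAux.sigma_ne_zero σ hb0
      have he : σ (τ π) / π / (σ π / π * b) - 1 = (σ b - b) / b := by
        rw [hστ]; field_simp
      rw [he, div_eq_mul_inv, hv.2.1 _ _ hs (inv_ne_zero hb0), RamAux.v_inv hv hb0, hvb]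
      omega
  · -- Part 3
    intro σ hσ
    have hpres := hsp_val σ hσ
    have hσπ0 : σ π ≠ 0 := RamAux.sigma_ne_zero σ hπ0
    constructor
    · intro hcong
      have hσπ2 : σ π = π ∨ (i : ℤ) + 2 ≤ v (σ π - π) := by
        rcases eq_or_ne (σ π) π with h | h
        · exact Or.inl h
        · refine Or.inr ?_
          have hsp : σ π - π ≠ 0 := sub_ne_zero.mpr h
          rcases hcong with h' | h'
          · exact absurd (by rw [div_eq_iff hπ0, one_mul] at h'; exact h') h
          · rw [div_one] at h'
            have he : σ π / π - 1 = (σ π - π) / π := by field_simp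
            rw [he, div_eq_mul_inv, hv.2.1 _ _ hsp (inv_ne_zero hπ0),
              RamAux.v_inv hv hπ0, hπ] at h'
            omega
      intro x hxint
      rcases RamAux2.approx hv htot hπ0 hπ i σ hpres hσπ2 (i + 2) x hxint with h | ⟨hne, hbd⟩
      · exact Or.inl h
      · refine Or.inr ?_
        push_cast at hbd
        omega
    · intro hσ'
      rcases eq_or_ne (σ π) π with heq | hne
      · exact Or.inl (by rw [heq, div_self hπ0])
      · refine Or.inr ?_
        have h : (i : ℤ) + 1 + 1 ≤ v (σ π - π) := (hσ' π hπint).resolve_left hne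
        rw [div_one]
        have hsp : σ π - π ≠ 0 := sub_ne_zero.mpr hne
        have he : σ π / π - 1 = (σ π - π) / π := by field_simp
        rw [he, div_eq_mul_inv, hv.2.1 _ _ hsp (inv_ne_zero hπ0), RamAux.v_inv hv hπ0, hπ]
        omega
  · -- Part 4
    intro π' hπ'0 hπ'1 σ hσ
    have hpres := hsp_val σ hσ
    have hσπ0 : σ π ≠ 0 := RamAux.sigma_ne_zero σ hπ0
    have hσπ'0 : σ π' ≠ 0 := RamAux.sigma_ne_zero σ hπ'0
    set u := π' / π with hu
    have hu0 : u ≠ 0 := div_ne_zero hπ'0 hπ0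
    have hvu : v u = 0 := by
      rw [hu, div_eq_mul_inv, hv.2.1 _ _ hπ'0 (inv_ne_zero hπ0), RamAux.v_inv hv hπ0,
        hπ, hπ'1]
      omega
    have huint : InIntegers v u := Or.inr (le_of_eq hvu.symm)
    have hπu : π * u = π' := by rw [hu]; field_simp
    have hσπ' : σ π' = σ π * σ u := by rw [← hπu, map_mul]
    have hσu0 : σ u ≠ 0 := RamAux.sigma_ne_zero σ hu0
    rcases eq_or_ne (σ u) u with h | h
    · refine Or.inl ?_
      rw [hσπ', h, ← hπu]
      rw [mul_div_mul_right _ _ hu0]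
    · refine Or.inr ?_
      have hs : σ u - u ≠ 0 := sub_ne_zero.mpr h
      have hbnd : (i : ℤ) + 1 ≤ v (σ u - u) := (hσ u huint).resolve_left h
      have he : σ π / π / (σ π' / π') - 1 = -(σ u - u) / σ u := by
        rw [hσπ', ← hπu]; field_simp; ring
      have hneg : -(σ u - u) ≠ 0 := neg_ne_zero.mpr hs
      rw [he, div_eq_mul_inv, hv.2.1 _ _ hneg (inv_ne_zero hσu0), RamAux.v_neg hv hs,
        RamAux.v_inv hv hσu0, hpres u hu0, hvu]
      omega
end
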